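/- arXiv:2308.09131 — 2 statements merged into one kernel-verified Lean document; each statement's English description precedes it below -/
import Mathlib

section
/- Let A be an n×n complex matrix and fix frame orientations g_i, g_j ∈ G. Then the expectation value of A in the reduced system state is the same in both QRF perspectives for every global state, i.e. Tr(Tr_F(𝐔 ρ 𝐔†) · A) = Tr(Tr_F(ρ) · A) for every density matrix ρ on ℂ^G ⊗ ℂ^n, if and only if A commutes with U_S(g) for all g ∈ G. -/
open Matrix Kronecker
open scoped ComplexOrder

variable {G : Type*} [Fintype G] [CommGroup G] [DecidableEq G] {n : ℕ}

/-- The QRF-transformation unitary `𝐔^{g_i,g_j} = Σ_g |g g_i⟩⟨g_j g⁻¹| ⊗ U_S(g)`. -/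
noncomputable def Uqrf (U : G →* Matrix.unitaryGroup (Fin n) ℂ) (gi gj : G) :
    Matrix (G × Fin n) (G × Fin n) ℂ :=
  ∑ g : G, Matrix.single (g * gi) (gj * g⁻¹) (1 : ℂ) ⊗ₖ
    (U g : Matrix (Fin n) (Fin n) ℂ)

/-- The partial trace over the frame factor `ℂ^G`. -/
noncomputable def trF (ρ : Matrix (G × Fin n) (G × Fin n) ℂ) :
    Matrix (Fin n) (Fin n) ℂ :=
  Matrix.of fun s t => ∑ g : G, ρ (g, s) (g, t)

set_option linter.unusedSectionVars false

lemma Uqrf_apply (U : G →* Matrix.unitaryGroup (Fin n) ℂ) (gi gj h k : G) (s u : Fin n) :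
    Uqrf U gi gj (h, s) (k, u) =
      if k = gj * gi * h⁻¹ then (U (h * gi⁻¹) : Matrix (Fin n) (Fin n) ℂ) s u else 0 := by
  unfold Uqrf
  rw [Matrix.sum_apply]
  rw [Finset.sum_eq_single (h * gi⁻¹)]
  · simp [Matrix.single, Matrix.kroneckerMap_apply, mul_comm, mul_assoc, mul_left_comm,
      eq_comm]
  · intro g _ hg
    simp only [Matrix.kroneckerMap_apply, Matrix.single, Matrix.of_apply]
    have : ¬ (g * gi = h ∧ gj * g⁻¹ = k) := by
      rintro ⟨h1, -⟩; exact hg (by rw [← h1]; group)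
    simp [this]
  · simp

open ComplexConjugate in
lemma sandwich_apply (U : G →* Matrix.unitaryGroup (Fin n) ℂ) (gi gj : G)
    (ρ : Matrix (G × Fin n) (G × Fin n) ℂ) (h : G) (s t : Fin n) :
    (Uqrf U gi gj * ρ * (Uqrf U gi gj)ᴴ) (h, s) (h, t)
      = ∑ u, ∑ v, (U (h * gi⁻¹) : Matrix (Fin n) (Fin n) ℂ) s u *
          ρ (gj * gi * h⁻¹, u) (gj * gi * h⁻¹, v) *
          conj ((U (h * gi⁻¹) : Matrix (Fin n) (Fin n) ℂ) t v) := by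
  simp only [Matrix.mul_apply, Matrix.conjTranspose_apply, Uqrf_apply, Fintype.sum_prod_type,
    apply_ite (star : ℂ → ℂ), star_zero, ite_mul, mul_ite, zero_mul, mul_zero, Finset.sum_ite_irrel, Finset.sum_const_zero, Finset.sum_ite_eq,
    Finset.sum_ite_eq', Finset.mem_univ, if_true, Finset.sum_mul, Finset.mul_sum]
  rw [Finset.sum_comm]
  refine Finset.sum_congr rfl fun u _ => Finset.sum_congr rfl fun v _ => rfl

noncomputable def blockAt (g : G) (ρ : Matrix (G × Fin n) (G × Fin n) ℂ) :
    Matrix (Fin n) (Fin n) ℂ :=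
  Matrix.of fun u v => ρ (g, u) (g, v)

lemma trF_eq_sum_block (ρ : Matrix (G × Fin n) (G × Fin n) ℂ) :
    trF ρ = ∑ g : G, blockAt g ρ := by
  ext s t
  simp [trF, blockAt, Matrix.sum_apply]

lemma aux_inv (a g : G) : a * (a * g⁻¹)⁻¹ = g := by
  rw [_root_.mul_inv_rev, inv_inv, mul_comm g a⁻¹, mul_inv_cancel_left]

def conjEquiv (a : G) : G ≃ G :=
  ⟨fun g => a * g⁻¹, fun g => a * g⁻¹, fun g => aux_inv a g, fun g => aux_inv a g⟩

lemma trF_sandwich (U : G →* Matrix.unitaryGroup (Fin n) ℂ) (gi gj : G)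
    (ρ : Matrix (G × Fin n) (G × Fin n) ℂ) :
    trF (Uqrf U gi gj * ρ * (Uqrf U gi gj)ᴴ)
      = ∑ g : G, (U (gj * g⁻¹) : Matrix (Fin n) (Fin n) ℂ) * blockAt g ρ *
          ((U (gj * g⁻¹) : Matrix (Fin n) (Fin n) ℂ))ᴴ := by
  ext s t
  show ∑ h : G, (Uqrf U gi gj * ρ * (Uqrf U gi gj)ᴴ) (h, s) (h, t) = _
  rw [← Equiv.sum_comp (conjEquiv (gj * gi))
    (fun h => (Uqrf U gi gj * ρ * (Uqrf U gi gj)ᴴ) (h, s) (h, t)), Matrix.sum_apply]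
  refine Finset.sum_congr rfl fun g _ => ?_
  have h1 : (conjEquiv (gj * gi) g : G) * gi⁻¹ = gj * g⁻¹ := by
    show gj * gi * g⁻¹ * gi⁻¹ = _
    rw [mul_right_comm, mul_inv_cancel_right]
  have h2 : gj * gi * (conjEquiv (gj * gi) g : G)⁻¹ = g := aux_inv _ _
  rw [sandwich_apply U gi gj ρ _ s t, h1, h2]
  simp only [Matrix.mul_apply, Matrix.conjTranspose_apply, blockAt, Matrix.of_apply,
    Finset.sum_mul]
  rw [Finset.sum_comm]
  rfl

open ComplexConjugate

section Quad
variable {ι : Type*} [Fintype ι] [DecidableEq ι]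

lemma trace_vecMulVec_mul (x : ι → ℂ) (M : Matrix (ι) (ι) ℂ) :
    (Matrix.vecMulVec x (star x) * M).trace = star x ⬝ᵥ M *ᵥ x := by
  simp only [Matrix.trace, Matrix.diag, Matrix.mul_apply, Matrix.vecMulVec_apply,
    Pi.star_apply, dotProduct, Matrix.mulVec, RCLike.star_def]
  rw [Finset.sum_comm]
  refine Finset.sum_congr rfl fun u _ => ?_
  rw [Finset.mul_sum]
  refine Finset.sum_congr rfl fun v _ => by ring

lemma posSemidef_vecMulVec_star (x : ι → ℂ) :
    (Matrix.vecMulVec x (star x)).PosSemidef := by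
  rw [Matrix.posSemidef_iff_dotProduct_mulVec]
  constructor
  · ext i j
    simp [Matrix.conjTranspose_apply, Matrix.vecMulVec_apply, mul_comm]
  · intro y
    have hcalc : star y ⬝ᵥ (Matrix.vecMulVec x (star x)) *ᵥ y
        = star (star x ⬝ᵥ y) * (star x ⬝ᵥ y) := by
      simp only [dotProduct, Matrix.mulVec, Matrix.vecMulVec_apply, Pi.star_apply,
        star_sum, star_mul', RCLike.star_def, Complex.conj_conj, Finset.sum_mul,
        Finset.mul_sum]
      rw [Finset.sum_comm]
      refine Finset.sum_congr rfl fun u _ => Finset.sum_congr rfl fun v _ => by ring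
    rw [hcalc]
    exact star_mul_self_nonneg _

lemma trace_vecMulVec_star (x : ι → ℂ) :
    (Matrix.vecMulVec x (star x)).trace = ∑ i, x i * conj (x i) := by
  simp [Matrix.trace, Matrix.diag, Matrix.vecMulVec_apply]

lemma quad_single (D : Matrix (ι) (ι) ℂ) (s : ι) (a : ℂ) :
    star (Pi.single s a) ⬝ᵥ D *ᵥ Pi.single s a = conj a * a * D s s := by
  simp only [dotProduct, Matrix.mulVec, Pi.star_apply, Pi.single_apply, RCLike.star_def,
    apply_ite conj, map_zero, ite_mul, zero_mul, mul_ite, mul_zero, Finset.sum_ite_eq,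
    Finset.sum_ite_eq', Finset.sum_ite_irrel, Finset.sum_const_zero, Finset.mem_univ, if_true]
  ring

lemma quad_pair (D : Matrix (ι) (ι) ℂ) {s t : ι} (hst : s ≠ t) (a b : ℂ) :
    star (Pi.single s a + Pi.single t b) ⬝ᵥ D *ᵥ (Pi.single s a + Pi.single t b)
      = conj a * a * D s s + conj a * b * D s t + conj b * a * D t s + conj b * b * D t t := by
  simp only [dotProduct, Matrix.mulVec, Pi.star_apply, Pi.add_apply, Pi.single_apply,
    RCLike.star_def, map_add, apply_ite conj, map_zero, add_mul, mul_add, ite_mul, zero_mul,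
    mul_ite, mul_zero, Finset.sum_add_distrib, Finset.sum_ite_irrel, Finset.sum_const_zero,
    Finset.sum_ite_eq, Finset.sum_ite_eq', Finset.mem_univ, if_true, hst, hst.symm, if_false]
  ring

lemma eq_of_quad (M N : Matrix (ι) (ι) ℂ)
    (h : ∀ x : ι → ℂ, star x ⬝ᵥ M *ᵥ x = star x ⬝ᵥ N *ᵥ x) : M = N := by
  have hdiag : ∀ s, M s s = N s s := by
    intro s
    have := h (Pi.single s 1)
    rw [quad_single, quad_single] at this
    simpa using this
  ext s t
  by_cases hst : s = t
  · subst hst; exact hdiag s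
  · have h1 := h (Pi.single s 1 + Pi.single t 1)
    have h2 := h (Pi.single s 1 + Pi.single t Complex.I)
    rw [quad_pair M hst, quad_pair N hst] at h1 h2
    simp only [_root_.map_one, one_mul, mul_one, Complex.conj_I] at h1 h2
    have e1 : M s t + M t s = N s t + N t s := by
      have := hdiag s; have := hdiag t; linear_combination h1 - hdiag s - hdiag t
    have e2 : Complex.I * (M s t - M t s) = Complex.I * (N s t - N t s) := by
      linear_combination h2 - hdiag s + (Complex.I * Complex.I) * hdiag t
    have e3 : M s t - M t s = N s t - N t s :=
      mul_left_cancel₀ Complex.I_ne_zero e2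
    linear_combination (e1 + e3) / 2

lemma quad_eq_of_unit (M N : Matrix (ι) (ι) ℂ)
    (h : ∀ x : ι → ℂ, (∑ i, x i * conj (x i)) = 1 → star x ⬝ᵥ M *ᵥ x = star x ⬝ᵥ N *ᵥ x) :
    M = N := by
  refine eq_of_quad M N fun x => ?_
  by_cases hx : x = 0
  · simp [hx]
  · set t : ℝ := ∑ i, Complex.normSq (x i) with ht
    have htpos : 0 < t := by
      obtain ⟨i, hi⟩ := Function.ne_iff.mp hx
      refine Finset.sum_pos' (fun j _ => Complex.normSq_nonneg _) ⟨i, Finset.mem_univ i, ?_⟩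
      simpa using Complex.normSq_pos.mpr hi
    set c : ℝ := Real.sqrt t with hc
    have hcpos : 0 < c := Real.sqrt_pos.mpr htpos
    have hc2 : (c : ℝ) * c = t := Real.mul_self_sqrt htpos.le
    set y : ι → ℂ := fun i => (c⁻¹ : ℂ) * x i with hy
    have hynorm : (∑ i, y i * conj (y i)) = 1 := by
      have : ∀ i, y i * conj (y i) = ((c⁻¹ * c⁻¹ : ℝ) : ℂ) * (x i * conj (x i)) := by
        intro i
        simp only [hy, _root_.map_mul, Complex.conj_ofReal, map_inv₀]
        push_cast
        ring
      rw [Finset.sum_congr rfl fun i _ => this i, ← Finset.mul_sum]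
      have hxc : (∑ i, x i * conj (x i)) = (t : ℂ) := by
        rw [ht]; push_cast
        exact Finset.sum_congr rfl fun i _ => (Complex.mul_conj (x i))
      rw [hxc]
      rw [show ((c⁻¹ * c⁻¹ : ℝ) : ℂ) * (t : ℂ) = (((c⁻¹ * c⁻¹) * t : ℝ) : ℂ) by push_cast; ring]
      norm_cast
      rw [← hc2]
      field_simp
    have hq := h y hynorm
    have hsc : ∀ (P : Matrix (ι) (ι) ℂ),
        star y ⬝ᵥ P *ᵥ y = ((c⁻¹ * c⁻¹ : ℝ) : ℂ) * (star x ⬝ᵥ P *ᵥ x) := by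
      intro P
      have : y = ((c⁻¹ : ℝ) : ℂ) • x := by funext i; simp [hy, Complex.ofReal_inv]
      rw [this, star_smul, Matrix.mulVec_smul, dotProduct_smul,
        smul_dotProduct]
      simp [smul_smul, Complex.conj_ofReal]
      push_cast
      ring
    rw [hsc M, hsc N] at hq
    have hne : ((c⁻¹ * c⁻¹ : ℝ) : ℂ) ≠ 0 := by
      simp [hcpos.ne']
    exact mul_left_cancel₀ hne hq

end Quad

/-- QRF-invariant system observable averages. The expectation value of
a system observable `A` in the reduced system state agrees in both QRF perspectives for
every global density matrix iff `A` is translation-invariant. -/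
theorem system_averages_invariant_iff (hn : 1 ≤ n)
    (U : G →* Matrix.unitaryGroup (Fin n) ℂ) (gi gj : G)
    (A : Matrix (Fin n) (Fin n) ℂ) :
    (∀ ρ : Matrix (G × Fin n) (G × Fin n) ℂ, ρ.PosSemidef → ρ.trace = 1 →
        (trF (Uqrf U gi gj * ρ * (Uqrf U gi gj)ᴴ) * A).trace = (trF ρ * A).trace) ↔
      (∀ g : G, A * (U g : Matrix (Fin n) (Fin n) ℂ) =
        (U g : Matrix (Fin n) (Fin n) ℂ) * A) := by
  have huni : ∀ g : G, ((U g : Matrix (Fin n) (Fin n) ℂ))ᴴ * (U g : Matrix (Fin n) (Fin n) ℂ)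
      = 1 := fun g => by
    rw [← Matrix.star_eq_conjTranspose]
    exact Matrix.UnitaryGroup.star_mul_self (U g)
  have huni' : ∀ g : G, (U g : Matrix (Fin n) (Fin n) ℂ) * ((U g : Matrix (Fin n) (Fin n) ℂ))ᴴ
      = 1 := fun g => by
    rw [← Matrix.star_eq_conjTranspose]
    exact (U g).2.2
  have hcyc : ∀ (g : G) (B : Matrix (Fin n) (Fin n) ℂ),
      ((U g : Matrix (Fin n) (Fin n) ℂ) * B * ((U g : Matrix (Fin n) (Fin n) ℂ))ᴴ * A).trace
        = (B * (((U g : Matrix (Fin n) (Fin n) ℂ))ᴴ * A * (U g : Matrix (Fin n) (Fin n) ℂ))).trace := by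
    intro g B
    calc ((U g : Matrix (Fin n) (Fin n) ℂ) * B * ((U g : Matrix (Fin n) (Fin n) ℂ))ᴴ * A).trace
        = (((U g : Matrix (Fin n) (Fin n) ℂ) * B) * (((U g : Matrix (Fin n) (Fin n) ℂ))ᴴ * A)).trace := by
          rw [mul_assoc]
      _ = ((((U g : Matrix (Fin n) (Fin n) ℂ))ᴴ * A) * ((U g : Matrix (Fin n) (Fin n) ℂ) * B)).trace :=
          Matrix.trace_mul_comm _ _
      _ = ((((U g : Matrix (Fin n) (Fin n) ℂ))ᴴ * A * (U g : Matrix (Fin n) (Fin n) ℂ)) * B).trace := by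
          rw [← mul_assoc]
      _ = (B * (((U g : Matrix (Fin n) (Fin n) ℂ))ᴴ * A * (U g : Matrix (Fin n) (Fin n) ℂ))).trace :=
          Matrix.trace_mul_comm _ _
  constructor
  · -- hard direction
    intro H g₀
    set gS : G := gj * g₀⁻¹ with hgS
    have hg0 : gj * gS⁻¹ = g₀ := aux_inv gj g₀
    have hAdj : ((U g₀ : Matrix (Fin n) (Fin n) ℂ))ᴴ * A * (U g₀ : Matrix (Fin n) (Fin n) ℂ)
        = A := by
      apply quad_eq_of_unit
      intro x hx
      set X : G × Fin n → ℂ := fun p => if p.1 = gS then x p.2 else 0 with hX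
      have hpsd := posSemidef_vecMulVec_star X
      have htr : (Matrix.vecMulVec X (star X)).trace = 1 := by
        rw [trace_vecMulVec_star, Fintype.sum_prod_type]
        simp only [hX, apply_ite conj, map_zero, ite_mul, mul_ite, zero_mul, mul_zero,
          Finset.sum_ite_irrel, Finset.sum_const_zero, Finset.sum_ite_eq,
          Finset.sum_ite_eq', Finset.mem_univ, if_true]
        exact hx
      have hblock : ∀ g : G, blockAt g (Matrix.vecMulVec X (star X))
          = if g = gS then Matrix.vecMulVec x (star x) else 0 := by
        intro g
        ext u v
        by_cases hg : g = gS <;>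
          simp [blockAt, Matrix.vecMulVec_apply, hX, hg]
      have hH := H _ hpsd htr
      rw [trF_sandwich, trF_eq_sum_block, Finset.sum_mul, Finset.sum_mul,
        Matrix.trace_sum, Matrix.trace_sum] at hH
      rw [Finset.sum_eq_single gS
          (fun g _ hg => by simp [hblock g, hg]) (by simp),
        Finset.sum_eq_single gS
          (fun g _ hg => by simp [hblock g, hg]) (by simp)] at hH
      rw [hblock, if_pos rfl, hg0, hcyc] at hH
      rw [trace_vecMulVec_mul, trace_vecMulVec_mul] at hH
      exact hH
    calc A * (U g₀ : Matrix (Fin n) (Fin n) ℂ)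
        = ((U g₀ : Matrix (Fin n) (Fin n) ℂ) * ((U g₀ : Matrix (Fin n) (Fin n) ℂ))ᴴ) *
            (A * (U g₀ : Matrix (Fin n) (Fin n) ℂ)) := by rw [huni', one_mul]
      _ = (U g₀ : Matrix (Fin n) (Fin n) ℂ) *
            (((U g₀ : Matrix (Fin n) (Fin n) ℂ))ᴴ * A * (U g₀ : Matrix (Fin n) (Fin n) ℂ)) := by
          rw [mul_assoc, ← mul_assoc (((U g₀ : Matrix (Fin n) (Fin n) ℂ))ᴴ) A]
      _ = (U g₀ : Matrix (Fin n) (Fin n) ℂ) * A := by rw [hAdj]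
  · -- easy direction
    intro hc ρ hpsd htr
    have hAd : ∀ g : G, ((U g : Matrix (Fin n) (Fin n) ℂ))ᴴ * A * (U g : Matrix (Fin n) (Fin n) ℂ)
        = A := fun g => by
      rw [mul_assoc, hc g, ← mul_assoc, huni g, one_mul]
    rw [trF_sandwich, trF_eq_sum_block, Finset.sum_mul, Finset.sum_mul,
      Matrix.trace_sum, Matrix.trace_sum]
    refine Finset.sum_congr rfl fun g _ => ?_
    rw [hcyc, hAd]
end

section
/- Fix frame orientations g_i, g_j ∈ G and β ∈ ℝ. Let H be a Hermitian n×n matrix and suppose G is partitioned into disjoint subsets G = G_a ∪ G_c such that U_S(h) H = −H U_S(h) for all h ∈ G_a (anticommutation) and U_S(g) H = H U_S(g) for all g ∈ G_c (commutation). Let ρ_F be a density matrix on ℂ^G, set Z := Tr(exp(−βH)) and ρ := ρ_F ⊗ exp(−βH)/Z (the system is in a Gibbs state at inverse temperature β relative to frame R_i). Then the reduced system state in the other frame perspective is the mixture of Gibbs states of opposite inverse temperatures Tr_F(𝐔 ρ 𝐔†) = q · exp(+βH)/Z + (1 − q) · exp(−βH)/Z, where q := Σ_{h∈G_a} ⟨g_j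 h⁻¹| ρ_F |g_j h⁻¹⟩. -/
open Matrix Kronecker
open scoped ComplexOrder

variable {G : Type*} [Fintype G] [CommGroup G] [DecidableEq G] {n : ℕ}

lemma kron_conjTranspose (A : Matrix G G ℂ) (B : Matrix (Fin n) (Fin n) ℂ) :
    (A ⊗ₖ B)ᴴ = Aᴴ ⊗ₖ Bᴴ := by
  ext ⟨a, b⟩ ⟨c, d⟩
  simp [conjTranspose_apply, kroneckerMap_apply, mul_comm]

lemma trF_kron (X : Matrix G G ℂ) (Y : Matrix (Fin n) (Fin n) ℂ) :
    trF (X ⊗ₖ Y) = X.trace • Y := by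
  ext s t
  simp [trF, Matrix.trace, Matrix.diag, Finset.sum_mul, kroneckerMap_apply]

lemma trF_sum {ι : Type*} (s : Finset ι) (f : ι → Matrix (G × Fin n) (G × Fin n) ℂ) :
    trF (∑ i ∈ s, f i) = ∑ i ∈ s, trF (f i) := by
  ext a b
  simp [trF, Matrix.sum_apply]
  exact Finset.sum_comm

lemma stdBasis_trace (p q p' q' : G) (A : Matrix G G ℂ) :
    (Matrix.single p q (1:ℂ) * A * Matrix.single q' p' (1:ℂ)).trace
      = if p = p' then A q q' else 0 := by
  simp only [Matrix.trace, Matrix.diag, Matrix.mul_apply, Matrix.single,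
    Matrix.of_apply]
  simp [Finset.sum_ite_eq, Finset.sum_ite_eq', ite_and]

lemma conj_exp (u : Matrix (Fin n) (Fin n) ℂ) (hu : u ∈ Matrix.unitaryGroup (Fin n) ℂ)
    (A : Matrix (Fin n) (Fin n) ℂ) :
    u * NormedSpace.exp A * uᴴ = NormedSpace.exp (u * A * uᴴ) := by
  have h1 : u * star u = 1 := (Matrix.mem_unitaryGroup_iff).mp hu
  have h2 : star u * u = 1 := (Matrix.mem_unitaryGroup_iff').mp hu
  let v : (Matrix (Fin n) (Fin n) ℂ)ˣ := ⟨u, star u, h1, h2⟩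
  have hv : uᴴ = ↑v⁻¹ := rfl
  rw [hv, show u = ↑v from rfl, Matrix.exp_units_conj]

lemma expand (U : G →* Matrix.unitaryGroup (Fin n) ℂ) (gi gj : G)
    (A : Matrix G G ℂ) (B : Matrix (Fin n) (Fin n) ℂ) :
    trF (Uqrf U gi gj * (A ⊗ₖ B) * (Uqrf U gi gj)ᴴ) =
      ∑ g : G, A (gj * g⁻¹) (gj * g⁻¹) •
        ((U g : Matrix (Fin n) (Fin n) ℂ) * B * (U g : Matrix (Fin n) (Fin n) ℂ)ᴴ) := by
  rw [Uqrf, Matrix.conjTranspose_sum, Finset.sum_mul, Finset.sum_mul]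
  rw [trF_sum]
  refine Finset.sum_congr rfl fun g _ => ?_
  rw [Finset.mul_sum, trF_sum]
  rw [Finset.sum_eq_single g]
  · rw [kron_conjTranspose, ← Matrix.mul_kronecker_mul, ← Matrix.mul_kronecker_mul, trF_kron]
    have : (Matrix.single (g * gi) (gj * g⁻¹) (1:ℂ))ᴴ
        = Matrix.single (gj * g⁻¹) (g * gi) (1:ℂ) := by
      ext a b; simp [conjTranspose_apply, Matrix.single, and_comm]
    rw [this, stdBasis_trace]
    simp
  · intro g' _ hg'
    rw [kron_conjTranspose, ← Matrix.mul_kronecker_mul, ← Matrix.mul_kronecker_mul, trF_kron]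
    have : (Matrix.single (g' * gi) (gj * g'⁻¹) (1:ℂ))ᴴ
        = Matrix.single (gj * g'⁻¹) (g' * gi) (1:ℂ) := by
      ext a b; simp [conjTranspose_apply, Matrix.single, and_comm]
    rw [this, stdBasis_trace]
    rw [if_neg (fun h => hg'.symm (mul_right_cancel h))]
    simp
  · simp

/-- QRF-relative temperature. If the system Hamiltonian `H`
anticommutes with the translations in `G_a` and commutes with those in its complement,
and the global state is `ρ_F ⊗ e^{-βH}/Z`, then the reduced system state in the other QRF
perspective is the mixture `q e^{+βH}/Z + (1-q) e^{-βH}/Z` of Gibbs states of opposite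
temperatures, with `q = Σ_{h∈G_a} ⟨g_j h⁻¹|ρ_F|g_j h⁻¹⟩`. -/
theorem gibbs_state_temperature_mixture (hn : 1 ≤ n)
    (U : G →* Matrix.unitaryGroup (Fin n) ℂ) (gi gj : G) (β : ℝ)
    (H : Matrix (Fin n) (Fin n) ℂ) (hH : H.IsHermitian)
    (Ga : Finset G)
    (hanti : ∀ h ∈ Ga,
      (U h : Matrix (Fin n) (Fin n) ℂ) * H = -(H * (U h : Matrix (Fin n) (Fin n) ℂ)))
    (hcomm : ∀ g : G, g ∉ Ga →
      (U g : Matrix (Fin n) (Fin n) ℂ) * H = H * (U g : Matrix (Fin n) (Fin n) ℂ))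
    (ρF : Matrix G G ℂ) (hρF : ρF.PosSemidef) (htrρF : ρF.trace = 1) :
    trF (Uqrf U gi gj *
          (ρF ⊗ₖ ((NormedSpace.exp ((-(β : ℂ)) • H)).trace⁻¹ •
            NormedSpace.exp ((-(β : ℂ)) • H))) *
          (Uqrf U gi gj)ᴴ) =
      (∑ h ∈ Ga, ρF (gj * h⁻¹) (gj * h⁻¹)) •
          ((NormedSpace.exp ((-(β : ℂ)) • H)).trace⁻¹ •
            NormedSpace.exp ((β : ℂ) • H)) +
        (1 - ∑ h ∈ Ga, ρF (gj * h⁻¹) (gj * h⁻¹)) •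
          ((NormedSpace.exp ((-(β : ℂ)) • H)).trace⁻¹ •
            NormedSpace.exp ((-(β : ℂ)) • H)) := by
  set c : ℂ := (NormedSpace.exp ((-(β : ℂ)) • H)).trace⁻¹ with hc
  rw [expand]
  have hconj : ∀ g : G,
      (U g : Matrix (Fin n) (Fin n) ℂ) * NormedSpace.exp ((-(β : ℂ)) • H) *
        (U g : Matrix (Fin n) (Fin n) ℂ)ᴴ =
      if g ∈ Ga then NormedSpace.exp ((β : ℂ) • H)
        else NormedSpace.exp ((-(β : ℂ)) • H) := by
    intro g
    set u : Matrix (Fin n) (Fin n) ℂ := (U g : Matrix (Fin n) (Fin n) ℂ) with hu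
    have huu : u * uᴴ = 1 := by
      simpa [star_eq_conjTranspose] using (Matrix.mem_unitaryGroup_iff).mp (U g).2
    rw [conj_exp u (U g).2]
    by_cases hg : g ∈ Ga
    · rw [if_pos hg]
      congr 1
      have h1 : u * H * uᴴ = -H := by
        rw [hanti g hg]
        rw [Matrix.neg_mul, Matrix.mul_assoc, huu, Matrix.mul_one]
      calc u * ((-(β : ℂ)) • H) * uᴴ = (-(β : ℂ)) • (u * H * uᴴ) := by
            rw [Matrix.mul_smul, Matrix.smul_mul]
        _ = (β : ℂ) • H := by rw [h1]; module
    · rw [if_neg hg]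
      congr 1
      have h1 : u * H * uᴴ = H := by
        rw [hcomm g hg, Matrix.mul_assoc, huu, Matrix.mul_one]
      rw [Matrix.mul_smul, Matrix.smul_mul, h1]
  have key : ∀ g : G, ρF (gj * g⁻¹) (gj * g⁻¹) •
      ((U g : Matrix (Fin n) (Fin n) ℂ) * (c • NormedSpace.exp ((-(β : ℂ)) • H)) *
        (U g : Matrix (Fin n) (Fin n) ℂ)ᴴ) =
      ρF (gj * g⁻¹) (gj * g⁻¹) •
        (c • (if g ∈ Ga then NormedSpace.exp ((β : ℂ) • H)
          else NormedSpace.exp ((-(β : ℂ)) • H))) := by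
    intro g
    rw [Matrix.mul_smul, Matrix.smul_mul, hconj g]
  simp only [key]
  rw [← Finset.sum_add_sum_compl Ga]
  have hsum_tot : ∑ g : G, ρF (gj * g⁻¹) (gj * g⁻¹) = 1 := by
    rw [← htrρF]
    exact Fintype.sum_equiv ((Equiv.inv G).trans (Equiv.mulLeft gj)) _ _ (fun g => rfl)
  have h1 : ∑ g ∈ Ga, ρF (gj * g⁻¹) (gj * g⁻¹) •
      (c • (if g ∈ Ga then NormedSpace.exp ((β : ℂ) • H)
        else NormedSpace.exp ((-(β : ℂ)) • H))) =
      (∑ h ∈ Ga, ρF (gj * h⁻¹) (gj * h⁻¹)) • (c • NormedSpace.exp ((β : ℂ) • H)) := by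
    rw [Finset.sum_smul]
    exact Finset.sum_congr rfl fun g hg => by rw [if_pos hg]
  have h2 : ∑ g ∈ Gaᶜ, ρF (gj * g⁻¹) (gj * g⁻¹) •
      (c • (if g ∈ Ga then NormedSpace.exp ((β : ℂ) • H)
        else NormedSpace.exp ((-(β : ℂ)) • H))) =
      (1 - ∑ h ∈ Ga, ρF (gj * h⁻¹) (gj * h⁻¹)) •
        (c • NormedSpace.exp ((-(β : ℂ)) • H)) := by
    have : ∑ g ∈ Gaᶜ, ρF (gj * g⁻¹) (gj * g⁻¹)
        = 1 - ∑ h ∈ Ga, ρF (gj * h⁻¹) (gj * h⁻¹) := by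
      have := Finset.sum_add_sum_compl Ga (fun g => ρF (gj * g⁻¹) (gj * g⁻¹))
      rw [hsum_tot] at this
      linear_combination this
    rw [← this, Finset.sum_smul]
    exact Finset.sum_congr rfl fun g hg => by
      rw [if_neg (Finset.mem_compl.mp hg)]
  rw [h1, h2]
end
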